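/- Let G be a finite group acting on a set X commuting with a map T : X → X, and let x be a periodic point. Then the quotient orbit length |O_{T'}(π(x))| times |O_T(x) ∩ O_G(x)| equals |O_T(x)|, and the fiber π⁻¹(O_{T'}(π(x))) restricted to periodic points of the same stabilizer class is a union of exactly |O_G(x)|/|O_T(x) ∩ O_G(x)| closed T-orbits, each of length |O_T(x)|; in particular π⁻¹(O_{T'}(π(x))) ∩ (⋃_{g∈G} g·O_T(x)) has cardinality |O_G(x)|·|O_T(x)| / |O_T(x) ∩ O_G(x)|. -/

import Mathlib

def Torbit {X : Type*} (T : X → X) (x : X) : Set X := {y | ∃ i : ℕ, T^[i] x = y}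

lemma Torbit_subset {X : Type*} {T : X → X} {y z : X} (h : z ∈ Torbit T y) :
    Torbit T z ⊆ Torbit T y := by
  obtain ⟨i, rfl⟩ := h
  rintro _ ⟨j, rfl⟩
  exact ⟨j + i, Function.iterate_add_apply T j i y⟩

lemma Torbit_per {X : Type*} {T : X → X} {n : ℕ} {y z : X} (hy : T^[n] y = y)
    (hz : z ∈ Torbit T y) : T^[n] z = z := by
  obtain ⟨i, rfl⟩ := hz
  rw [← Function.iterate_add_apply, add_comm, Function.iterate_add_apply, hy]

lemma Torbit_eq {X : Type*} {T : X → X} {n : ℕ} {y z : X} (hn : 0 < n) (hy : T^[n] y = y)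
    (hz : z ∈ Torbit T y) : Torbit T z = Torbit T y := by
  refine Set.Subset.antisymm (Torbit_subset hz) (Torbit_subset ?_)
  obtain ⟨i, rfl⟩ := hz
  refine ⟨n * (i + 1) - i, ?_⟩
  have hle : i ≤ n * (i + 1) := le_trans (Nat.le_succ i) (Nat.le_mul_of_pos_left _ hn)
  have hmul : T^[n * (i + 1)] y = y := Function.IsPeriodicPt.mul_const hy (i + 1)
  rw [← Function.iterate_add_apply, Nat.sub_add_cancel hle, hmul]

lemma count_aux {α β : Type*} {S : Set α} (hS : S.Finite) (f : α → β) {c : ℕ}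
    (h : ∀ w ∈ f '' S, {y ∈ S | f y = w}.ncard = c) :
    (f '' S).ncard * c = S.ncard := by
  classical
  have hfS : (f '' S).Finite := hS.image f
  have key : hS.toFinset.card = ∑ w ∈ hfS.toFinset, (hS.toFinset.filter (fun y => f y = w)).card :=
    Finset.card_eq_sum_card_fiberwise (fun y hy => by
      simp only [Finset.mem_coe, Set.Finite.mem_toFinset] at hy ⊢
      exact ⟨y, hy, rfl⟩)
  have hfib : ∀ w ∈ hfS.toFinset, (hS.toFinset.filter (fun y => f y = w)).card = c := by
    intro w hw
    rw [Set.Finite.mem_toFinset] at hw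
    rw [← h w hw, ← Set.ncard_coe_finset]
    congr 1
    ext y
    simp [Set.Finite.mem_toFinset]
  rw [Finset.sum_congr rfl hfib, Finset.sum_const, smul_eq_mul] at key
  rw [Set.ncard_eq_toFinset_card _ hfS, Set.ncard_eq_toFinset_card _ hS, key]


theorem stmt_19 {X G : Type*} [Group G] [Fintype G] [MulAction G X]
    (T : X → X) (hcomm : ∀ (g : G) (y : X), g • T y = T (g • y))
    (T' : Quotient (MulAction.orbitRel G X) → Quotient (MulAction.orbitRel G X))
    (hT' : ∀ y : X, T' (Quotient.mk (MulAction.orbitRel G X) y) =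
        Quotient.mk (MulAction.orbitRel G X) (T y))
    (x : X) (hx : x ∈ Function.periodicPts T) (k : ℕ)
    (hk : (Torbit T x ∩ MulAction.orbit G x).ncard = k) :
    -- |O_{T'}(π(x))| · k = |O_T(x)|
    (Torbit T' (Quotient.mk (MulAction.orbitRel G X) x)).ncard * k =
        (Torbit T x).ncard ∧
    -- the union ⋃_{g∈G} g·O_T(x) consists of exactly |O_G(x)|/k closed T-orbits ...
    {A : Set X | ∃ y ∈ ⋃ g : G, (g • ·) '' Torbit T x, A = Torbit T y}.ncard * k =
        (MulAction.orbit G x).ncard ∧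
    -- ... each of length |O_T(x)|
    (∀ y ∈ ⋃ g : G, (g • ·) '' Torbit T x, (Torbit T y).ncard = (Torbit T x).ncard) ∧
    -- |π⁻¹(O_{T'}(π(x))) ∩ ⋃_{g∈G} g·O_T(x)| = |O_G(x)|·|O_T(x)|/k
    ((Quotient.mk (MulAction.orbitRel G X) ⁻¹'
          Torbit T' (Quotient.mk (MulAction.orbitRel G X) x)) ∩
        ⋃ g : G, (g • ·) '' Torbit T x).ncard * k =
      (MulAction.orbit G x).ncard * (Torbit T x).ncard := by
    classical
  subst hk
  obtain ⟨n, hn, hxn'⟩ := hx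
  have hxn : T^[n] x = x := hxn'
  set π : X → Quotient (MulAction.orbitRel G X) := Quotient.mk (MulAction.orbitRel G X) with hπ
  set O : Set X := Torbit T x with hO
  set R : Set X := MulAction.orbit G x with hR
  set U : Set X := ⋃ g : G, (g • ·) '' O with hU
  -- basic facts
  have hπeq : ∀ a b : X, π a = π b ↔ a ∈ MulAction.orbit G b := by
    intro a b
    rw [hπ, Quotient.eq]
    exact MulAction.orbitRel_apply
  have hcomm' : ∀ (g : G) (i : ℕ) (y : X), g • T^[i] y = T^[i] (g • y) := by
    intro g i
    induction i with
    | zero => intro y; simp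
    | succ i ih =>
        intro y
        rw [Function.iterate_succ_apply, Function.iterate_succ_apply, ih, hcomm]
  have hgx_per : ∀ g : G, T^[n] (g • x) = g • x := by
    intro g; rw [← hcomm', hxn]
  have hgO : ∀ g : G, (g • ·) '' O = Torbit T (g • x) := by
    intro g
    ext z
    constructor
    · rintro ⟨_, ⟨i, rfl⟩, rfl⟩
      exact ⟨i, (hcomm' g i x).symm⟩
    · rintro ⟨i, rfl⟩
      exact ⟨T^[i] x, ⟨i, rfl⟩, hcomm' g i x⟩
  have hTj_injOn : ∀ j : ℕ, Set.InjOn T^[j] {z | T^[n] z = z} := by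
    intro j a ha b hb hab
    have ha' : T^[n * j] a = a := Function.IsPeriodicPt.mul_const ha j
    have hb' : T^[n * j] b = b := Function.IsPeriodicPt.mul_const hb j
    have hle : j ≤ n * j := Nat.le_mul_of_pos_left _ hn
    calc a = T^[n * j] a := ha'.symm
      _ = T^[n * j - j] (T^[j] a) := by rw [← Function.iterate_add_apply, Nat.sub_add_cancel hle]
      _ = T^[n * j - j] (T^[j] b) := by rw [hab]
      _ = T^[n * j] b := by rw [← Function.iterate_add_apply, Nat.sub_add_cancel hle]
      _ = b := hb'
  have hOsub : O ⊆ {z | T^[n] z = z} := fun z hz => Torbit_per hxn hz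
  -- finiteness
  have hO_eq : O = (fun i => T^[i] x) '' Set.Iio n := by
    ext y
    constructor
    · rintro ⟨i, rfl⟩
      refine ⟨i % n, Nat.mod_lt _ hn, ?_⟩
      conv_rhs => rw [← Nat.mod_add_div i n]
      rw [Function.iterate_add_apply, Function.IsPeriodicPt.mul_const hxn (i / n)]
    · rintro ⟨i, _, rfl⟩
      exact ⟨i, rfl⟩
  have hOfin : O.Finite := hO_eq ▸ (Set.finite_Iio n).image _
  have hRfin : R.Finite := Set.finite_range _
  have hUfin : U.Finite := Set.finite_iUnion (fun g => hOfin.image _)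
  -- T' iterates
  have hT'iter : ∀ i : ℕ, T'^[i] (π x) = π (T^[i] x) := by
    intro i
    induction i with
    | zero => rfl
    | succ i ih =>
        rw [Function.iterate_succ_apply', Function.iterate_succ_apply', ih, hπ, hT']
  have hT'orb : Torbit T' (π x) = π '' O := by
    ext w
    constructor
    · rintro ⟨i, rfl⟩
      exact ⟨T^[i] x, ⟨i, rfl⟩, (hT'iter i).symm⟩
    · rintro ⟨_, ⟨i, rfl⟩, rfl⟩
      exact ⟨i, hT'iter i⟩
  -- fiber 1
  have fiber1 : ∀ w ∈ π '' O, {y ∈ O | π y = w}.ncard = (O ∩ R).ncard := by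
    rintro w ⟨_, ⟨j, rfl⟩, rfl⟩
    have hset : {y ∈ O | π y = π (T^[j] x)} = T^[j] '' (O ∩ R) := by
      ext y
      simp only [Set.mem_setOf_eq, Set.mem_image, Set.mem_inter_iff]
      constructor
      · rintro ⟨⟨i, rfl⟩, hy⟩
        rw [hπeq] at hy
        obtain ⟨g, hg⟩ := hy
        have hg' : T^[j] (g • x) = T^[i] x := by
          rw [← hcomm']
          exact hg
        have hle : j ≤ i + n * (j + 1) :=
          le_trans (le_trans (Nat.le_succ j) (Nat.le_mul_of_pos_left _ hn)) (Nat.le_add_left _ _)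
        have h1 : T^[j] (T^[i + n * (j + 1) - j] x) = T^[i] x := by
          rw [← Function.iterate_add_apply]
          have key : j + (i + n * (j + 1) - j) = i + n * (j + 1) := by omega
          have hmul : T^[n * (j + 1)] x = x := Function.IsPeriodicPt.mul_const hxn (j + 1)
          rw [key, Function.iterate_add_apply, hmul]
        have h2 : T^[i + n * (j + 1) - j] x = g • x := by
          refine hTj_injOn j ?_ ?_ (by rw [h1, ← hg'])
          · exact hOsub ⟨i + n * (j + 1) - j, rfl⟩
          · exact hgx_per g
        refine ⟨T^[i + n * (j + 1) - j] x, ⟨⟨i + n * (j + 1) - j, rfl⟩, ?_⟩, by rw [h2]; exact hg'⟩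
        rw [h2]
        exact MulAction.mem_orbit x g
      · rintro ⟨y, ⟨⟨i, rfl⟩, hyR⟩, rfl⟩
        obtain ⟨g, hg⟩ := hyR
        have hg' : g • x = T^[i] x := hg
        constructor
        · exact ⟨j + i, Function.iterate_add_apply T j i x⟩
        · rw [hπeq]
          have hmem : T^[j] (T^[i] x) = g • T^[j] x := by rw [hcomm', hg']
          exact hmem ▸ MulAction.mem_orbit (T^[j] x) g
    rw [hset, Set.ncard_image_of_injOn ((hTj_injOn j).mono (fun z hz => hOsub hz.1))]
  have claim1 : (Torbit T' (π x)).ncard * (O ∩ R).ncard = O.ncard := by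
    rw [hT'orb]
    exact count_aux hOfin π fiber1
  -- U characterization
  have hU_mem : ∀ (g : G), g • x ∈ U := fun g =>
    Set.mem_iUnion.mpr ⟨g, x, ⟨0, rfl⟩, rfl⟩
  have hU_char : ∀ y ∈ U, ∃ g : G, Torbit T y = Torbit T (g • x) := by
    intro y hy
    obtain ⟨g, hy2⟩ := Set.mem_iUnion.mp hy
    obtain ⟨z, ⟨i, rfl⟩, hz⟩ := hy2
    have hz' : g • T^[i] x = y := hz
    subst hz'
    refine ⟨g, ?_⟩
    rw [hcomm']
    exact Torbit_eq hn (hgx_per g) ⟨i, rfl⟩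
  -- fiber 2
  have fiber2 : ∀ A ∈ Torbit T '' R, {z ∈ R | Torbit T z = A}.ncard = (O ∩ R).ncard := by
    rintro A ⟨z, hzR, rfl⟩
    obtain ⟨g, hg⟩ := hzR
    have hg' : g • x = z := hg
    subst hg'
    have hset : {z ∈ R | Torbit T z = Torbit T (g • x)} = (g • ·) '' (O ∩ R) := by
      ext z
      simp only [Set.mem_setOf_eq, Set.mem_image, Set.mem_inter_iff]
      constructor
      · rintro ⟨hzR, hz⟩
        have hzmem : z ∈ Torbit T z := ⟨0, rfl⟩
        rw [hz, ← hgO g] at hzmem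
        obtain ⟨w, hwO, hw⟩ := hzmem
        have hw' : g • w = z := hw
        refine ⟨w, ⟨hwO, ?_⟩, hw⟩
        obtain ⟨h, hh⟩ := hzR
        have hh' : h • x = z := hh
        refine ⟨g⁻¹ * h, ?_⟩
        show (g⁻¹ * h) • x = w
        rw [mul_smul, hh', ← hw', inv_smul_smul]
      · rintro ⟨w, ⟨hwO, hwR⟩, hw⟩
        have hw' : g • w = z := hw
        obtain ⟨h, hh⟩ := hwR
        have hh' : h • x = w := hh
        constructor
        · exact ⟨g * h, show (g * h) • x = z by rw [mul_smul, hh', hw']⟩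
        · rw [← hw']
          refine Torbit_eq hn (hgx_per g) ?_
          rw [← hgO g]
          exact ⟨w, hwO, rfl⟩
    rw [hset, Set.ncard_image_of_injective _ (MulAction.injective g)]
  have claim2' : (Torbit T '' R).ncard * (O ∩ R).ncard = R.ncard :=
    count_aux hRfin _ fiber2
  have hsetA : {A : Set X | ∃ y ∈ U, A = Torbit T y} = Torbit T '' R := by
    ext A
    simp only [Set.mem_setOf_eq, Set.mem_image]
    constructor
    · rintro ⟨y, hy, rfl⟩
      obtain ⟨g, hg⟩ := hU_char y hy
      exact ⟨g • x, MulAction.mem_orbit x g, hg.symm⟩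
    · rintro ⟨z, hzR, rfl⟩
      obtain ⟨g, hg⟩ := hzR
      have hg' : g • x = z := hg
      subst hg'
      exact ⟨g • x, hU_mem g, rfl⟩
  -- claim 3
  have claim3 : ∀ y ∈ U, (Torbit T y).ncard = O.ncard := by
    intro y hy
    obtain ⟨g, hg⟩ := hU_char y hy
    rw [hg, ← hgO g, Set.ncard_image_of_injective _ (MulAction.injective g)]
  -- fiber 3
  have fiber3 : ∀ A ∈ Torbit T '' U, {y ∈ U | Torbit T y = A}.ncard = O.ncard := by
    rintro A ⟨y₀, hy₀, rfl⟩
    obtain ⟨g, hg⟩ := hU_char y₀ hy₀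
    have hset : {y ∈ U | Torbit T y = Torbit T y₀} = Torbit T y₀ := by
      ext z
      simp only [Set.mem_setOf_eq]
      constructor
      · rintro ⟨hzU, hz⟩
        rw [← hz]
        exact ⟨0, rfl⟩
      · intro hz
        have hz' : z ∈ Torbit T (g • x) := hg ▸ hz
        constructor
        · have hz'' := hz'
          rw [← hgO g] at hz''
          exact Set.mem_iUnion.mpr ⟨g, hz''⟩
        · rw [Torbit_eq hn (hgx_per g) hz', hg]
    rw [hset]
    exact claim3 y₀ hy₀
  have claim4' : (Torbit T '' U).ncard * O.ncard = U.ncard :=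
    count_aux hUfin _ fiber3
  have hTU : Torbit T '' U = Torbit T '' R := by
    ext A
    constructor
    · rintro ⟨y, hy, rfl⟩
      obtain ⟨g, hg⟩ := hU_char y hy
      exact ⟨g • x, MulAction.mem_orbit x g, hg.symm⟩
    · rintro ⟨z, hzR, rfl⟩
      obtain ⟨g, hg⟩ := hzR
      have hg' : g • x = z := hg
      subst hg'
      exact ⟨g • x, hU_mem g, rfl⟩
  -- preimage equality
  have hpre : (π ⁻¹' Torbit T' (π x)) ∩ U = U := by
    refine Set.inter_eq_right.mpr ?_
    intro y hy
    obtain ⟨g, hy2⟩ := Set.mem_iUnion.mp hy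
    obtain ⟨z, ⟨i, rfl⟩, hz⟩ := hy2
    have hz' : g • T^[i] x = y := hz
    subst hz'
    refine ⟨i, ?_⟩
    rw [hT'iter i]
    exact ((hπeq _ _).mpr (MulAction.mem_orbit (T^[i] x) g)).symm
  refine ⟨claim1, ?_, claim3, ?_⟩
  · rw [hsetA]
    exact claim2'
  · rw [hpre, ← claim4', hTU, mul_right_comm, claim2']
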